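/- There exists exactly one pair of real numbers (x₁, x₂) with 0 < x₂ < x₁ < π/2 satisfying the two equations cot(x₁−x₂) + cot(x₁+x₂) + cot 2x₁ = 0 and cot(x₂−x₁) + cot(x₁+x₂) + cot 2x₂ = 0. -/

import Mathlib

open Real

lemma alg_key (a b c d : ℝ) (ha : 0 < a) (hc : 0 < c) (hd : 0 < d)
    (hp2 : c^2 + d^2 = 1)
    (h1 : 0 < a*d + b*c) (h2 : 0 < a*d - b*c)
    (e1 : d/c + b/a + (b*d - a*c)/(a*d + b*c) = 0)
    (e2 : -(d/c) + b/a + (b*d + a*c)/(a*d - b*c) = 0) :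
    b = 0 ∧ c = √2/2 := by
  have ha' := ha.ne'
  have hc' := hc.ne'
  have h1' := h1.ne'
  have h2' := h2.ne'
  replace e1 : (d*a + c*b)*(a*d + b*c) + c*a*(b*d - a*c) = 0 := by
    rw [div_add_div _ _ hc' ha', div_add_div _ _ (mul_ne_zero hc' ha') h1', div_eq_zero_iff] at e1
    rcases e1 with h | h
    · exact h
    · exact absurd h (mul_ne_zero (mul_ne_zero hc' ha') h1')
  replace e2 : (-d*a + c*b)*(a*d - b*c) + c*a*(b*d + a*c) = 0 := by
    rw [← neg_div, div_add_div _ _ hc' ha', div_add_div _ _ (mul_ne_zero hc' ha') h2', div_eq_zero_iff] at e2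
    rcases e2 with h | h
    · exact h
    · exact absurd h (mul_ne_zero (mul_ne_zero hc' ha') h2')
  have habcd : a*b*c*d = 0 := by linear_combination (1/6) * e1 + (1/6) * e2
  have hb : b = 0 := by
    rcases mul_eq_zero.mp habcd with h | h
    · rcases mul_eq_zero.mp h with h | h
      · rcases mul_eq_zero.mp h with h | h
        · exact absurd h ha'
        · exact h
      · exact absurd h hc'
    · exact absurd h hd.ne'
  subst hb
  have hc2 : c^2 = 1/2 := by
    have : a^2 * (d^2 - c^2) = 0 := by linear_combination e1
    rcases mul_eq_zero.mp this with h | h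
    · exact absurd h (pow_ne_zero 2 ha')
    · nlinarith
  have hr : (√2/2)^2 = 1/2 := by
    rw [div_pow, sq_sqrt (by norm_num : (0:ℝ) ≤ 2)]; norm_num
  have hrpos : (0:ℝ) < √2/2 := by positivity
  have : (c - √2/2) * (c + √2/2) = 0 := by ring_nf; nlinarith [hc2, hr]
  rcases mul_eq_zero.mp this with h | h
  · exact ⟨rfl, by linarith⟩
  · linarith

lemma st_key (s t : ℝ) (hs0 : 0 < s) (hsπ : s < π) (ht0 : 0 < t) (ht2 : t < π/2)
    (hts : t < s) (hstπ : s + t < π)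
    (e1 : Real.cot t + Real.cot s + Real.cot (s + t) = 0)
    (e2 : -Real.cot t + Real.cot s + Real.cot (s - t) = 0) :
    s = π/2 ∧ t = π/4 := by
  have hπ := pi_pos
  have hsins : 0 < sin s := sin_pos_of_pos_of_lt_pi hs0 hsπ
  have hsint : 0 < sin t := sin_pos_of_pos_of_lt_pi ht0 (by linarith)
  have hcost : 0 < cos t := cos_pos_of_mem_Ioo ⟨by linarith, ht2⟩
  have hsinst : 0 < sin (s + t) := sin_pos_of_pos_of_lt_pi (by linarith) hstπ
  have hsinst' : 0 < sin (s - t) := sin_pos_of_pos_of_lt_pi (by linarith) (by linarith)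
  rw [sin_add] at hsinst
  rw [sin_sub] at hsinst'
  rw [Real.cot_eq_cos_div_sin, Real.cot_eq_cos_div_sin, Real.cot_eq_cos_div_sin,
    cos_add, sin_add] at e1
  rw [Real.cot_eq_cos_div_sin, Real.cot_eq_cos_div_sin, Real.cot_eq_cos_div_sin,
    cos_sub, sin_sub] at e2
  have key := alg_key (sin s) (cos s) (sin t) (cos t) hsins hsint hcost
    (sin_sq_add_cos_sq t) (by linarith) (by linarith)
    (by linear_combination e1) (by linear_combination e2)
  obtain ⟨hb, hct⟩ := key
  constructor
  · rcases Real.cos_eq_zero_iff.mp hb with ⟨k, hk⟩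
    have hk0 : k = 0 := by
      rcases lt_trichotomy k 0 with h | h | h
      · exfalso
        have : (k:ℝ) ≤ -1 := by exact_mod_cast (by omega : k ≤ -1)
        nlinarith
      · exact h
      · exfalso
        have : (1:ℝ) ≤ (k:ℝ) := by exact_mod_cast h
        nlinarith
    rw [hk0] at hk; push_cast at hk; linarith
  · have : t = π/4 := by
      have h4 : sin (π/4) = √2/2 := Real.sin_pi_div_four
      refine Real.injOn_sin ⟨by linarith, by linarith⟩ ⟨by linarith, by linarith⟩ ?_
      rw [hct, h4]
    exact this


/-- There is exactly one pair `(x₁, x₂)` with `0 < x₂ < x₁ < π/2` satisfying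
`cot(x₁-x₂) + cot(x₁+x₂) + cot 2x₁ = 0` and `cot(x₂-x₁) + cot(x₁+x₂) + cot 2x₂ = 0`. -/
theorem stmt_12 :
    ∃! p : ℝ × ℝ, (0 < p.2 ∧ p.2 < p.1 ∧ p.1 < π / 2) ∧
      Real.cot (p.1 - p.2) + Real.cot (p.1 + p.2) + Real.cot (2 * p.1) = 0 ∧
      Real.cot (p.2 - p.1) + Real.cot (p.1 + p.2) + Real.cot (2 * p.2) = 0 := by
  have hπ := pi_pos
  refine ⟨(3*π/8, π/8), ⟨⟨by positivity, by linarith, by linarith⟩, ?_, ?_⟩, ?_⟩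
  · show Real.cot (3*π/8 - π/8) + Real.cot (3*π/8 + π/8) + Real.cot (2 * (3*π/8)) = 0
    have h1 : (3*π/8 - π/8 : ℝ) = π/4 := by ring
    have h2 : (3*π/8 + π/8 : ℝ) = π/2 := by ring
    have h3 : (2 * (3*π/8) : ℝ) = π - π/4 := by ring
    rw [h1, h2, h3, Real.cot_eq_cos_div_sin, Real.cot_eq_cos_div_sin,
      Real.cot_eq_cos_div_sin, Real.cos_pi_div_two, Real.sin_pi_div_two,
      Real.cos_pi_sub, Real.sin_pi_sub, Real.sin_pi_div_four, Real.cos_pi_div_four]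
    have hne : (√2/2 : ℝ) ≠ 0 := by positivity
    field_simp
    ring
  · show Real.cot (π/8 - 3*π/8) + Real.cot (3*π/8 + π/8) + Real.cot (2 * (π/8)) = 0
    have h1 : (π/8 - 3*π/8 : ℝ) = -(π/4) := by ring
    have h2 : (3*π/8 + π/8 : ℝ) = π/2 := by ring
    have h3 : (2 * (π/8) : ℝ) = π/4 := by ring
    rw [h1, h2, h3, Real.cot_eq_cos_div_sin, Real.cot_eq_cos_div_sin,
      Real.cot_eq_cos_div_sin, Real.cos_pi_div_two, Real.sin_pi_div_two,
      Real.cos_neg, Real.sin_neg, Real.sin_pi_div_four, Real.cos_pi_div_four]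
    have hne : (√2/2 : ℝ) ≠ 0 := by positivity
    field_simp
    ring
  · rintro ⟨x₁, x₂⟩ ⟨⟨h0, h12, h1⟩, e1, e2⟩
    simp only at h0 h12 h1 e1 e2
    have hst : (2:ℝ) * x₁ = (x₁ + x₂) + (x₁ - x₂) := by ring
    have hst' : (2:ℝ) * x₂ = (x₁ + x₂) - (x₁ - x₂) := by ring
    have hx21 : x₂ - x₁ = -(x₁ - x₂) := by ring
    rw [hst] at e1
    rw [hst', hx21] at e2
    have hcotneg : Real.cot (-(x₁ - x₂)) = -Real.cot (x₁ - x₂) := by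
      rw [Real.cot_eq_cos_div_sin, Real.cot_eq_cos_div_sin, Real.sin_neg, Real.cos_neg]
      ring
    rw [hcotneg] at e2
    obtain ⟨hs, ht⟩ := st_key (x₁ + x₂) (x₁ - x₂) (by linarith) (by linarith)
      (by linarith) (by linarith) (by linarith) (by linarith)
      (by linarith [e1]) (by linarith [e2])
    have hx1 : x₁ = 3*π/8 := by linarith
    have hx2 : x₂ = π/8 := by linarith
    simp [hx1, hx2, Prod.ext_iff]
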